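/- arXiv:0807.0087 — 5 statements merged into one kernel-verified Lean document; each statement's English description precedes it below -/
import Mathlib

section
/- In a tree-child time consistent hybridization network N, a child v of a node u is a tree node (has u as its only parent) if, and only if, v is a strict descendant of u (every path from the root to v contains u). -/
open Classical

/-- A walk (path) in a digraph: a nonempty list of vertices with consecutive arcs. -/
def IsWalk {V : Type} (E : V → V → Prop) (p : List V) : Prop := p ≠ [] ∧ p.Chain' E

/-- A path with origin `u` and end `v`. -/
def WalkFromTo {V : Type} (E : V → V → Prop) (u v : V) (p : List V) : Prop :=
  IsWalk E p ∧ p.head? = some u ∧ p.getLast? = some v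

/-- `v` is a descendant of `u` (possibly trivial path from `u` to `v`). -/
def Desc {V : Type} (E : V → V → Prop) (u v : V) : Prop := Relation.ReflTransGen E u v

/-- A root: a node with no incoming arcs. -/
def IsRootNode {V : Type} (E : V → V → Prop) (r : V) : Prop := ∀ u, ¬ E u r

/-- `u` is a strict ancestor of `v`: `v` is a descendant of `u` and every path
from a root to `v` contains `u`. -/
def StrictAnc {V : Type} (E : V → V → Prop) (u v : V) : Prop :=
  Desc E u v ∧ ∀ (r : V) (p : List V), IsRootNode E r → WalkFromTo E r v p → u ∈ p

/-- In-degree. -/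
noncomputable def indeg {V : Type} (E : V → V → Prop) (v : V) : ℕ := {u | E u v}.ncard
/-- Out-degree. -/
noncomputable def outdeg {V : Type} (E : V → V → Prop) (v : V) : ℕ := {w | E v w}.ncard

/-- Tree node: in-degree at most 1. -/
def IsTreeNode {V : Type} (E : V → V → Prop) (v : V) : Prop := indeg E v ≤ 1
/-- Hybrid node: in-degree at least 2. -/
def IsHybrid {V : Type} (E : V → V → Prop) (v : V) : Prop := 2 ≤ indeg E v
/-- Leaf: no outgoing arcs. -/
def IsLeaf {V : Type} (E : V → V → Prop) (v : V) : Prop := ∀ w, ¬ E v w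

/-- Acyclicity: no non-trivial path from a node to itself. -/
def Acyclic {V : Type} (E : V → V → Prop) : Prop := ∀ v, ¬ Relation.TransGen E v v

/-- A hybridization network: a rooted DAG whose single root has out-degree > 1. -/
structure IsHybNet {V : Type} (E : V → V → Prop) (r : V) : Prop where
  acyclic : Acyclic E
  isRoot : IsRootNode E r
  uniqueRoot : ∀ x, IsRootNode E x → x = r
  rootOut : 2 ≤ outdeg E r

/-- Tree-child condition: every internal node has a tree-node child. -/
def TreeChild {V : Type} (E : V → V → Prop) : Prop :=
  ∀ v, ¬ IsLeaf E v → ∃ w, E v w ∧ IsTreeNode E w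

/-- Time consistency: a temporal representation exists. -/
def TimeConsistent {V : Type} (E : V → V → Prop) : Prop :=
  ∃ τ : V → ℕ, ∀ u v, E u v → (IsTreeNode E v → τ u < τ v) ∧ (IsHybrid E v → τ u = τ v)

/-- The leaves are bijectively labeled by `S` via `leaf`. -/
def LabelsLeaves {V S : Type} (E : V → V → Prop) (leaf : S → V) : Prop :=
  Function.Injective leaf ∧ (∀ s, IsLeaf E (leaf s)) ∧ ∀ v, IsLeaf E v → ∃ s, leaf s = v

/-- Distance: length of a shortest path from `u` to `v`. -/
noncomputable def dist {V : Type} (E : V → V → Prop) (u v : V) : ℕ :=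
  sInf {n | ∃ p, WalkFromTo E u v p ∧ p.length = n + 1}

/-- Height: largest length of a path from `v` to a leaf. -/
noncomputable def height {V : Type} (E : V → V → Prop) (v : V) : ℕ :=
  sSup {n | ∃ p w, WalkFromTo E v w p ∧ IsLeaf E w ∧ p.length = n + 1}

/-- Common ancestors of `u` and `v` that are strict ancestors of at least one of them. -/
def CSAnc {V : Type} (E : V → V → Prop) (u v : V) : Set V :=
  {x | Desc E x u ∧ Desc E x v ∧ (StrictAnc E x u ∨ StrictAnc E x v)}

/-- `x` is a least common semi-strict ancestor of `u` and `v`. -/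
def IsLCSA {V : Type} (E : V → V → Prop) (u v x : V) : Prop :=
  x ∈ CSAnc E u v ∧ ∀ y ∈ CSAnc E u v, height E x ≤ height E y

/-- The least common semi-strict ancestor `[u,v]` (the root `r` witnesses nonemptiness). -/
noncomputable def lcsa {V : Type} (E : V → V → Prop) (r u v : V) : V :=
  @Classical.epsilon V ⟨r⟩ (IsLCSA E u v)

/-- `ℓ_N(u,v)`: the distance from `[u,v]` to `u`. -/
noncomputable def ell {V : Type} (E : V → V → Prop) (r u v : V) : ℕ :=
  dist E (lcsa E r u v) u

/-- `L_N(u,v) = ℓ_N(u,v) + ℓ_N(v,u)`: the LCSA-path length between `u` and `v`. -/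
noncomputable def pathLen {V : Type} (E : V → V → Prop) (r u v : V) : ℕ :=
  ell E r u v + ell E r v u

/-- `h_N(u,v)`: −1 if `[u,v]` is a strict ancestor of `u` only, 1 if of `v` only, 0 if of both. -/
noncomputable def hval {V : Type} (E : V → V → Prop) (r u v : V) : ℤ :=
  if StrictAnc E (lcsa E r u v) u then
    (if StrictAnc E (lcsa E r u v) v then 0 else -1)
  else 1

/-- Siblings: distinct nodes sharing a parent. -/
def Sibling {V : Type} (E : V → V → Prop) (u v : V) : Prop :=
  u ≠ v ∧ ∃ p, E p u ∧ E p v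

/-- A tree path: a non-trivial path whose end and intermediate nodes are tree nodes. -/
def TreePath {V : Type} (E : V → V → Prop) (p : List V) (u v : V) : Prop :=
  WalkFromTo E u v p ∧ 2 ≤ p.length ∧ ∀ w ∈ p.tail, IsTreeNode E w

/-- `v` is a tree descendant of `u`. -/
def TreeDesc {V : Type} (E : V → V → Prop) (u v : V) : Prop := ∃ p, TreePath E p u v

/-- Quasi-binary hybridization network. -/
def QuasiBinary {V : Type} (E : V → V → Prop) : Prop :=
  ∀ v : V, (indeg E v, outdeg E v) ∈ ({(0,2),(1,0),(1,2),(2,0),(2,1),(2,2)} : Set (ℕ × ℕ))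

/-- Fully resolved hybridization network node types. -/
def FullyResolvedHyb {V : Type} (E : V → V → Prop) : Prop :=
  ∀ v : V, (indeg E v, outdeg E v) ∈ ({(0,2),(1,0),(1,2),(2,0),(2,2)} : Set (ℕ × ℕ))

/-- Fully resolved phylogenetic network node types. -/
def FullyResolvedPhylo {V : Type} (E : V → V → Prop) : Prop :=
  ∀ v : V, (indeg E v, outdeg E v) ∈ ({(0,2),(1,0),(1,2),(2,1)} : Set (ℕ × ℕ))

/-- Phylogenetic network condition: every hybrid node has exactly one child, a tree node. -/
def PhyloNet {V : Type} (E : V → V → Prop) : Prop :=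
  ∀ v, IsHybrid E v → ∃ w, E v w ∧ IsTreeNode E w ∧ ∀ x, E v x → x = w

/-- τ is monotone along a walk. -/
lemma tau_mono_walk {V : Type} (E : V → V → Prop) (τ : V → ℕ)
    (hstep : ∀ a b, E a b → τ a ≤ τ b) :
    ∀ q : List V, q.Chain' E → ∀ x y, q.head? = some x → q.getLast? = some y →
      τ x ≤ τ y := by
  intro q
  induction q with
  | nil => intro _ x y hx; simp at hx
  | cons a t IH =>
    intro hc x y hx hy
    cases t with
    | nil =>
      simp at hx hy
      subst hx; subst hy
      exact le_refl _
    | cons b t' =>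
      simp only [List.head?_cons, Option.some.injEq] at hx
      subst hx
      rw [List.getLast?_cons_cons] at hy
      rw [List.Chain', List.isChain_cons_cons] at hc
      have h1 : τ b ≤ τ y := IH hc.2 b y rfl hy
      have h2 : τ a ≤ τ b := hstep a b hc.1
      omega

/-- The last vertex of a non-trivial walk has an in-neighbour on the walk. -/
lemma exists_parent_of_last {V : Type} (E : V → V → Prop) :
    ∀ p : List V, p.Chain' E → 2 ≤ p.length → ∀ v, p.getLast? = some v →
      ∃ z ∈ p, E z v := by
  intro p
  induction p with
  | nil => intro _ h; simp at h
  | cons a t IH =>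
    intro hc hlen v hv
    cases t with
    | nil => simp at hlen
    | cons b t' =>
      rw [List.getLast?_cons_cons] at hv
      rw [List.Chain', List.isChain_cons_cons] at hc
      cases t' with
      | nil =>
        simp at hv
        subst hv
        exact ⟨a, by simp, hc.1⟩
      | cons c t'' =>
        obtain ⟨z, hz, hzv⟩ := IH hc.2 (by simp) v hv
        exact ⟨z, by simp [List.mem_cons] at hz ⊢; tauto, hzv⟩

/-- Key lemma: if `v` is a hybrid child of `u` and some node `x` has a walk to `v`
avoiding `u`, then there is a walk from the root `r` to `v` avoiding `u`. -/
lemma avoid_path {V : Type} [Fintype V] (E : V → V → Prop) (r : V)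
    (hnet : IsHybNet E r) (τ : V → ℕ)
    (hτ : ∀ a b, E a b → (IsTreeNode E b → τ a < τ b) ∧ (IsHybrid E b → τ a = τ b))
    (u v : V) (hv : IsHybrid E v) (huv : E u v) :
    ∀ x (q : List V), WalkFromTo E x v q → u ∉ q →
      ∃ p, WalkFromTo E r v p ∧ u ∉ p := by
  have hstep : ∀ a b, E a b → τ a ≤ τ b := by
    intro a b hab
    rcases le_or_gt (indeg E b) 1 with h | h
    · exact le_of_lt ((hτ a b hab).1 h)
    · exact le_of_eq ((hτ a b hab).2 h)
  have hirr : IsIrrefl V (Relation.TransGen E) := ⟨fun a h => hnet.acyclic a h⟩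
  have wf : WellFounded (Relation.TransGen E) :=
    Finite.wellFounded_of_trans_of_irrefl _
  intro x
  induction x using wf.induction with
  | _ x IH =>
    intro q hq hu
    by_cases hxr : x = r
    · exact ⟨q, hxr ▸ hq, hu⟩
    · by_cases hcase : ∃ p', E p' x ∧ p' ≠ u
      · obtain ⟨p', hp', hpu⟩ := hcase
        refine IH p' (Relation.TransGen.single hp') (p' :: q) ?_ ?_
        · refine ⟨⟨by simp, ?_⟩, by simp, ?_⟩
          · rw [List.Chain', List.isChain_cons]
            refine ⟨fun y hy => ?_, hq.1.2⟩
            have : y = x := by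
              rw [hq.2.1] at hy; simpa using hy.symm
            exact this ▸ hp'
          · exact List.mem_getLast?_cons hq.2.2
        · simp only [List.mem_cons, not_or]
          exact ⟨fun h => hpu h.symm, hu⟩
      · -- every parent of x is u, so x is a tree node; derive a contradiction
        push_neg at hcase
        have hxroot : ¬ IsRootNode E x := fun h => hxr (hnet.uniqueRoot x h)
        have hpar : ∃ w, E w x := by
          by_contra h
          push_neg at h
          exact hxroot h
        obtain ⟨w, hw⟩ := hpar
        have hwu : w = u := hcase w hw
        have hux : E u x := hwu ▸ hw
        have hset : {z | E z x} = {u} := by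
          ext z
          simp only [Set.mem_setOf_eq, Set.mem_singleton_iff]
          exact ⟨fun h => hcase z h, fun h => h ▸ hux⟩
        have htree : IsTreeNode E x := by
          unfold IsTreeNode indeg
          rw [hset, Set.ncard_singleton]
        have h1 : τ u < τ x := (hτ u x hux).1 htree
        have h2 : τ x ≤ τ v := tau_mono_walk E τ hstep q hq.1.2 x v hq.2.1 hq.2.2
        have h3 : τ u = τ v := (hτ u v huv).2 hv
        omega

/-- In a TCTC hybridization network, a child `v` of `u` is a tree node
iff `v` is a strict descendant of `u`. -/
theorem stmt2 {V : Type} [Fintype V] (E : V → V → Prop) (r : V)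
    (hnet : IsHybNet E r) (htc : TreeChild E) (hti : TimeConsistent E)
    (u v : V) (huv : E u v) :
    IsTreeNode E v ↔ StrictAnc E u v := by
  have huvne : u ≠ v := by
    intro h
    exact hnet.acyclic v (Relation.TransGen.single (h ▸ huv))
  constructor
  · intro htree
    refine ⟨Relation.ReflTransGen.single huv, ?_⟩
    intro r' p hr' hp
    have hrr : r' = r := hnet.uniqueRoot r' hr'
    have hvr : v ≠ r' := by
      intro h
      exact hr' u (h ▸ huv)
    -- p has length ≥ 2
    have hlen : 2 ≤ p.length := by
      rcases p with _ | ⟨a, _ | ⟨b, t⟩⟩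
      · exact absurd hp.1.1 (by simp)
      · obtain ⟨_, h1, h2⟩ := hp
        simp at h1 h2
        exact absurd (h1.symm.trans h2) hvr.symm
      · simp
    obtain ⟨z, hz, hzv⟩ := exists_parent_of_last E p hp.1.2 hlen v hp.2.2
    have hz' : z = u := by
      have h1 : z ∈ {w | E w v} := hzv
      have h2 : u ∈ {w | E w v} := huv
      exact (Set.ncard_le_one_iff (Set.toFinite _)).mp htree h1 h2
    exact hz' ▸ hz
  · intro hsa
    by_contra htree
    have hhyb : IsHybrid E v := by
      unfold IsTreeNode at htree
      unfold IsHybrid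
      omega
    obtain ⟨τ, hτ⟩ := hti
    obtain ⟨w, hwmem, hwu⟩ :=
      Set.exists_ne_of_one_lt_ncard (s := {z | E z v}) (by exact hhyb) u
    have hq : WalkFromTo E w v [w, v] :=
      ⟨⟨by simp, List.isChain_pair.mpr hwmem⟩, by simp, by simp⟩
    have hu : u ∉ [w, v] := by
      intro h
      simp only [List.mem_cons, List.not_mem_nil, or_false] at h
      rcases h with h | h
      · exact hwu h.symm
      · exact huvne h
    obtain ⟨p, hp, hup⟩ := avoid_path E r hnet τ hτ u v hhyb huv w [w, v] hq hu
    exact hup (hsa.2 r p hnet.isRoot hp)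
end

section
/- All children of the root of a tree-child time consistent hybridization network are tree nodes. -/
open Classical

lemma wf_of_acyclic {V : Type} [Fintype V] {E : V → V → Prop} (h : Acyclic E) :
    WellFounded E := by
  have : IsIrrefl V (Relation.TransGen E) := ⟨fun a ha => h a ha⟩
  have hwf : WellFounded (Relation.TransGen E) :=
    Finite.wellFounded_of_trans_of_irrefl _
  exact Subrelation.wf (fun {a b} hab => Relation.TransGen.single hab) hwf

lemma reachable_from_root {V : Type} [Fintype V] {E : V → V → Prop} {r : V}
    (hnet : IsHybNet E r) : ∀ x, Relation.ReflTransGen E r x := by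
  intro x
  induction x using (wf_of_acyclic hnet.acyclic).induction with
  | _ x ih =>
    by_cases hx : ∃ u, E u x
    · obtain ⟨u, hu⟩ := hx
      exact (ih u hu).tail hu
    · push_neg at hx
      have : x = r := hnet.uniqueRoot x hx
      subst this; exact Relation.ReflTransGen.refl

lemma tau_mono {V : Type} {E : V → V → Prop} {τ : V → ℕ}
    (hτ : ∀ u v, E u v → (IsTreeNode E v → τ u < τ v) ∧ (IsHybrid E v → τ u = τ v)) :
    ∀ {u v}, Relation.ReflTransGen E u v → τ u ≤ τ v := by
  intro u v h
  induction h with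
  | refl => exact le_refl _
  | @tail b c _ hbc ih =>
    have := hτ b c hbc
    by_cases hc : IsTreeNode E c
    · exact le_of_lt (lt_of_le_of_lt ih (this.1 hc))
    · have : τ b = τ c := this.2 (by unfold IsTreeNode at hc; unfold IsHybrid; omega)
      omega

/-- All children of the root of a TCTC hybridization network are tree nodes. -/
theorem stmt3 {V : Type} [Fintype V] (E : V → V → Prop) (r : V)
    (hnet : IsHybNet E r) (htc : TreeChild E) (hti : TimeConsistent E) :
    ∀ v, E r v → IsTreeNode E v := by
  obtain ⟨τ, hτ⟩ := hti
  -- key: no non-root node has τ equal to τ r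
  have key : ∀ x, x ≠ r → τ x ≠ τ r := by
    intro x
    induction x using (wf_of_acyclic hnet.acyclic).induction with
    | _ x ih =>
      intro hxr hτx
      -- x is not a root, so it has a parent
      have hnotroot : ¬ IsRootNode E x := fun h => hxr (hnet.uniqueRoot x h)
      unfold IsRootNode at hnotroot
      push_neg at hnotroot
      obtain ⟨q, hq⟩ := hnotroot
      -- x must be hybrid: otherwise τ q < τ x = τ r ≤ τ q
      have hxhyb : IsHybrid E x := by
        by_contra hhyb
        have htree : IsTreeNode E x := by unfold IsHybrid at hhyb; unfold IsTreeNode; omega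
        have h1 : τ q < τ x := (hτ q x hq).1 htree
        have h2 : τ r ≤ τ q := tau_mono hτ (reachable_from_root hnet q)
        omega
      -- x has a parent p ≠ r
      have hsub : ¬ ({u | E u x} ⊆ {r}) := by
        intro hsub
        have : ({u | E u x}).ncard ≤ ({r} : Set V).ncard :=
          Set.ncard_le_ncard hsub (Set.finite_singleton r)
        rw [Set.ncard_singleton] at this
        unfold IsHybrid indeg at hxhyb
        omega
      rw [Set.not_subset] at hsub
      obtain ⟨p, hp, hpr⟩ := hsub
      simp only [Set.mem_setOf_eq] at hp
      simp only [Set.mem_singleton_iff] at hpr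
      -- τ p = τ x = τ r
      have hτp : τ p = τ r := by
        have := (hτ p x hp).2 hxhyb
        omega
      exact ih p hp hpr hτp
  intro v hv
  by_contra htree
  have hvhyb : IsHybrid E v := by unfold IsTreeNode at htree; unfold IsHybrid; omega
  have hvr : v ≠ r := fun h => hnet.isRoot r (h ▸ hv)
  have : τ r = τ v := (hτ r v hv).2 hvhyb
  exact key v hvr this.symm
end

section
/- Every tree-child time consistent hybridization network with more than one leaf contains a node v satisfying one of the following: (a) v is an internal tree node and all its children are tree leaves; (b) v is an internal hybrid node, all its children are tree leaves, and all its siblings are leaves or hybrid nodes; (c) v is a hybrid leaf and all its siblings are leaves or hybrid nodes. -/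
open Classical

/-- Every TCTC hybridization network with more than one leaf contains a node
satisfying one of the three listed properties. -/
theorem stmt4 {V : Type} [Fintype V] (E : V → V → Prop) (r : V)
    (hnet : IsHybNet E r) (htc : TreeChild E) (hti : TimeConsistent E)
    (hleaves : 1 < {v | IsLeaf E v}.ncard) :
    ∃ v : V,
      (¬ IsLeaf E v ∧ IsTreeNode E v ∧ ∀ w, E v w → IsLeaf E w ∧ IsTreeNode E w) ∨
      (¬ IsLeaf E v ∧ IsHybrid E v ∧ (∀ w, E v w → IsLeaf E w ∧ IsTreeNode E w) ∧
        ∀ w, Sibling E v w → IsLeaf E w ∨ IsHybrid E w) ∨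
      (IsLeaf E v ∧ IsHybrid E v ∧ ∀ w, Sibling E v w → IsLeaf E w ∨ IsHybrid E w) := by
  classical
  obtain ⟨τ, hτ⟩ := hti
  have hdich : ∀ x : V, ¬ IsTreeNode E x → IsHybrid E x := by
    intro x hx; unfold IsTreeNode at hx; unfold IsHybrid; omega
  have hrint : ¬ IsLeaf E r := by
    intro h
    have h0 : outdeg E r = 0 := by
      unfold outdeg
      have : {w | E r w} = (∅ : Set V) := by ext w; simp [h w]
      rw [this, Set.ncard_empty]
    have := hnet.rootOut
    omega
  -- internal nodes as a finset
  set I : Finset V := Finset.univ.filter (fun v => ¬ IsLeaf E v) with hI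
  have hrI : r ∈ I := by simp [hI, hrint]
  obtain ⟨b, hbI, hbmax⟩ := Finset.exists_max_image I τ ⟨r, hrI⟩
  set M := τ b with hM
  have hmax : ∀ u, ¬ IsLeaf E u → τ u ≤ M := by
    intro u hu; exact hbmax u (by simp [hI, hu])
  -- the set of internal nodes of maximal time
  set A : Set V := {v | ¬ IsLeaf E v ∧ τ v = M} with hA
  have hAne : A.Nonempty := ⟨b, by simp [hA, hI] at hbI ⊢; exact ⟨hbI, hM.symm⟩⟩
  -- well-foundedness to get minimal element (no child in A)
  haveI : IsTrans V (fun a b => Relation.TransGen E b a) :=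
    ⟨fun a b c h1 h2 => h2.trans h1⟩
  haveI : IsIrrefl V (fun a b => Relation.TransGen E b a) :=
    ⟨fun a h => hnet.acyclic a h⟩
  have wf : WellFounded (fun a b : V => Relation.TransGen E b a) :=
    Finite.wellFounded_of_trans_of_irrefl _
  obtain ⟨v, hvA, hvmin⟩ := wf.has_min A hAne
  obtain ⟨hvint, hvM⟩ := hvA
  have hnochild : ∀ w, E v w → w ∉ A := by
    intro w hw hwA
    exact hvmin w hwA (Relation.TransGen.single hw)
  -- all children of v are leaves
  have hchleaf : ∀ w, E v w → IsLeaf E w := by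
    intro w hw
    by_contra hwl
    have hwle : τ w ≤ M := hmax w hwl
    by_cases htw : IsTreeNode E w
    · have := (hτ v w hw).1 htw
      omega
    · have hwh := hdich w htw
      have := (hτ v w hw).2 hwh
      exact hnochild w hw ⟨hwl, by omega⟩
  by_cases hhyb : ∃ w, E v w ∧ IsHybrid E w
  · -- case (c): a hybrid leaf child
    obtain ⟨w, hvw, hwh⟩ := hhyb
    have hwleaf : IsLeaf E w := hchleaf w hvw
    have hwM : τ w = M := by have := (hτ v w hvw).2 hwh; omega
    refine ⟨w, Or.inr (Or.inr ⟨hwleaf, hwh, ?_⟩)⟩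
    rintro x ⟨hne, p, hpw, hpx⟩
    by_contra hx
    push_neg at hx
    obtain ⟨hxl, hxh⟩ := hx
    have hxt : IsTreeNode E x := by
      by_contra h; exact hxh (hdich x h)
    have hpM : τ p = τ w := (hτ p w hpw).2 hwh
    have : τ p < τ x := (hτ p x hpx).1 hxt
    have := hmax x hxl
    omega
  · -- all children are tree leaves
    push_neg at hhyb
    have hcht : ∀ w, E v w → IsLeaf E w ∧ IsTreeNode E w := by
      intro w hw
      refine ⟨hchleaf w hw, ?_⟩
      by_contra h
      exact (hhyb w hw) (hdich w h)
    by_cases hvt : IsTreeNode E v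
    · exact ⟨v, Or.inl ⟨hvint, hvt, hcht⟩⟩
    · have hvh := hdich v hvt
      refine ⟨v, Or.inr (Or.inl ⟨hvint, hvh, hcht, ?_⟩)⟩
      rintro x ⟨hne, p, hpv, hpx⟩
      by_contra hx
      push_neg at hx
      obtain ⟨hxl, hxh⟩ := hx
      have hxt : IsTreeNode E x := by
        by_contra h; exact hxh (hdich x h)
      have hpM : τ p = τ v := (hτ p v hpv).2 hvh
      have : τ p < τ x := (hτ p x hpx).1 hxt
      have := hmax x hxl
      omega
end

section
/- In a tree-child hybridization network, every internal node u has at least one tree descendant leaf; moreover, every tree descendant v of u is a strict descendant of u and the tree path from u to v is unique. -/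
open Classical

section Stmt5Aux
set_option linter.unusedSectionVars false

variable {V : Type} [Fintype V] {E : V → V → Prop}

lemma parent_unique {v a b : V} (hv : IsTreeNode E v) (ha : E a v) (hb : E b v) : a = b :=
  (Set.ncard_le_one (Set.toFinite _)).mp hv a ha b hb

lemma walk_head_cons {p : List V} {u v : V} (h : WalkFromTo E u v p) :
    ∃ l, p = u :: l := by
  obtain ⟨⟨hne, hch⟩, hh, hl⟩ := h
  cases p with
  | nil => simp at hh
  | cons a l => simp only [List.head?_cons, Option.some.injEq] at hh; exact ⟨l, by rw [hh]⟩

lemma walk_chain {p l : List V} {u v : V} (h : WalkFromTo E u v p) (hp : p = u :: l) :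
    List.Chain E u l ∧ (u :: l).getLast (List.cons_ne_nil _ _) = v := by
  obtain ⟨⟨hne, hch⟩, hh, hl⟩ := h
  subst hp
  constructor
  · exact List.isChain_cons.mp hch |>.elim (fun h1 h2 => by
      cases l with
      | nil => exact List.Chain.nil
      | cons b l' => exact List.Chain.cons (h1 b rfl) h2)
  · rw [List.getLast?_eq_getLast (List.cons_ne_nil _ _)] at hl
    exact Option.some.inj hl

lemma walk_reflTransGen {p : List V} {u v : V} (h : WalkFromTo E u v p) :
    Relation.ReflTransGen E u v := by
  obtain ⟨l, rfl⟩ := walk_head_cons h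
  obtain ⟨hch, hlast⟩ := walk_chain h rfl
  exact List.relationReflTransGen_of_exists_isChain_cons l hch hlast

lemma walk_transGen {p : List V} {u v : V} (h : WalkFromTo E u v p)
    (hlen : 2 ≤ p.length) : Relation.TransGen E u v := by
  obtain ⟨l, rfl⟩ := walk_head_cons h
  cases l with
  | nil => simp at hlen
  | cons b l' =>
    obtain ⟨hch, hlast⟩ := walk_chain h rfl
    cases hch with
    | cons_cons hub hch' =>
      exact Relation.TransGen.head' hub
        (List.relationReflTransGen_of_exists_isChain_cons l' hch' hlast)

lemma walk_len2 {p : List V} {u v : V} (h : WalkFromTo E u v p) (hne : u ≠ v) :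
    2 ≤ p.length := by
  obtain ⟨l, rfl⟩ := walk_head_cons h
  cases l with
  | nil =>
    obtain ⟨-, hlast⟩ := walk_chain h rfl
    simp only [List.getLast_singleton] at hlast
    exact absurd hlast hne
  | cons b l' => simp [Nat.succ_le_succ, Nat.le_add_left]

lemma walk_singleton {p : List V} {u v : V} (h : WalkFromTo E u v p)
    (hl : p.length = 1) : p = [u] ∧ u = v := by
  obtain ⟨l, rfl⟩ := walk_head_cons h
  cases l with
  | nil =>
    obtain ⟨-, hlast⟩ := walk_chain h rfl
    exact ⟨rfl, by simpa using hlast⟩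
  | cons b l' => simp at hl

lemma walk_snoc {p : List V} {u v : V} (h : WalkFromTo E u v p) (hlen : 2 ≤ p.length) :
    ∃ p₁ b, p = p₁ ++ [v] ∧ WalkFromTo E u b p₁ ∧ E b v ∧ p₁.getLast? = some b := by
  obtain ⟨⟨hne, hch⟩, hh, hl⟩ := h
  have hdecomp : p.dropLast ++ [v] = p := by
    exact List.dropLast_append_getLast? v hl
  have hd1 : p.dropLast ≠ [] := by
    intro hcon
    have := congrArg List.length hcon
    simp [List.length_dropLast] at this
    omega
  obtain ⟨b, hb⟩ : ∃ b, p.dropLast.getLast? = some b := by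
    cases hx : p.dropLast.getLast? with
    | none => exact absurd (List.getLast?_eq_none_iff.mp hx) hd1
    | some b => exact ⟨b, rfl⟩
  refine ⟨p.dropLast, b, hdecomp.symm, ⟨⟨hd1, ?_⟩, ?_, hb⟩, ?_, hb⟩
  · have := hdecomp ▸ hch
    exact (List.isChain_append.mp this).1
  · rw [← hdecomp] at hh
    rwa [List.head?_append_of_ne_nil _ hd1] at hh
  · have := hdecomp ▸ hch
    have h3 := (List.isChain_append.mp this).2.2
    exact h3 b hb v rfl

lemma treePath_pair {u v : V} (hE : E u v) (hv : IsTreeNode E v) :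
    TreePath E [u, v] u v := by
  refine ⟨⟨⟨by simp, ?_⟩, rfl, rfl⟩, by simp, ?_⟩
  · exact List.isChain_cons_cons.mpr ⟨hE, List.isChain_singleton v⟩
  · intro w hw; simp only [List.tail_cons, List.mem_singleton] at hw; rwa [hw]

lemma treePath_cons {p : List V} {u w v : V} (hp : TreePath E p w v) (hE : E u w)
    (hw : IsTreeNode E w) : TreePath E (u :: p) u v := by
  obtain ⟨⟨⟨hne, hch⟩, hh, hl⟩, hlen, htail⟩ := hp
  refine ⟨⟨⟨by simp, ?_⟩, rfl, ?_⟩, by simp; omega, ?_⟩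
  · exact List.isChain_cons.mpr ⟨fun y hy => by rw [hh] at hy; exact (Option.some.inj hy) ▸ hE, hch⟩
  · cases p with
    | nil => exact absurd rfl hne
    | cons a l => simpa using hl
  · intro x hx
    simp only [List.tail_cons] at hx
    obtain ⟨l, rfl⟩ := walk_head_cons ⟨⟨hne, hch⟩, hh, hl⟩
    rcases List.mem_cons.mp hx with rfl | hx
    · exact hw
    · exact htail x hx

lemma treePath_snoc {p : List V} {u b v : V} (hp : TreePath E p u b) (hE : E b v)
    (hv : IsTreeNode E v) : TreePath E (p ++ [v]) u v := by
  obtain ⟨⟨⟨hne, hch⟩, hh, hl⟩, hlen, htail⟩ := hp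
  refine ⟨⟨⟨by simp, ?_⟩, ?_, ?_⟩, ?_, ?_⟩
  · exact List.IsChain.append hch (List.isChain_singleton v)
      (fun x hx y hy => by
        simp only [hl, Option.mem_def, Option.some.injEq] at hx
        simp only [List.head?_cons, Option.mem_def, Option.some.injEq] at hy
        subst hx; subst hy; exact hE)
  · rwa [List.head?_append_of_ne_nil _ hne]
  · simp [List.getLast?_concat]
  · simp; omega
  · intro w hw
    rw [List.tail_append_singleton_of_ne_nil hne] at hw
    rcases List.mem_append.mp hw with h1 | h1
    · exact htail w h1
    · simp only [List.mem_singleton] at h1; rwa [h1]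

lemma mem_of_getLast?' {l : List V} {b : V} (h : l.getLast? = some b) : b ∈ l := by
  cases l with
  | nil => simp at h
  | cons a l' =>
    rw [List.getLast?_eq_getLast (List.cons_ne_nil a l')] at h
    exact (Option.some.inj h) ▸ List.getLast_mem _

lemma chain_restrict : ∀ {l : List V} {u : V}, List.Chain E u l →
    (∀ x ∈ l, IsTreeNode E x) →
    List.Chain (fun a b => E a b ∧ IsTreeNode E b) u l := by
  intro l
  induction l with
  | nil => intro u _ _; exact List.Chain.nil
  | cons b l' ih =>
    intro u hch ht
    cases hch with
    | cons_cons hub hch' =>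
      exact List.Chain.cons ⟨hub, ht b (by simp)⟩
        (ih hch' (fun x hx => ht x (by simp [hx])))

lemma mem_walk_of_transGen {u v : V}
    (h : Relation.TransGen (fun a b => E a b ∧ IsTreeNode E b) u v) :
    ∀ (r : V) (p : List V), IsRootNode E r → WalkFromTo E r v p → u ∈ p := by
  induction h with
  | @single w hb =>
    intro r p hr hp
    have hne : r ≠ w := fun h => hr u (h ▸ hb.1)
    obtain ⟨p₁, b, rfl, hp₁, hbv, hb1⟩ := walk_snoc hp (walk_len2 hp hne)
    have hbu : b = u := parent_unique hb.2 hbv hb.1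
    have : b ∈ p₁ := mem_of_getLast?' hb1
    exact hbu ▸ List.mem_append.mpr (Or.inl this)
  | @tail w x hab hbv ih =>
    intro r p hr hp
    have hne : r ≠ x := fun h => hr w (h ▸ hbv.1)
    obtain ⟨p₁, c, rfl, hp₁, hcv, hc1⟩ := walk_snoc hp (walk_len2 hp hne)
    have : c = w := parent_unique hbv.2 hcv hbv.1
    subst this
    exact List.mem_append.mpr (Or.inl (ih r p₁ hr hp₁))

lemma treePath_unique_aux (hac : Acyclic E) :
    ∀ (n : ℕ) (p q : List V) (u v : V), p.length ≤ n →
      TreePath E p u v → TreePath E q u v → p = q := by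
  intro n
  induction n with
  | zero => intro p q u v hlen hp _; have := hp.2.1; omega
  | succ n ih =>
    intro p q u v hlen hp hq
    have huv : u ≠ v := by
      intro h; subst h; exact hac u (walk_transGen hp.1 hp.2.1)
    -- v is a tree node
    have hvtree : IsTreeNode E v := by
      obtain ⟨l, hpl⟩ := walk_head_cons hp.1
      cases l with
      | nil => rw [hpl] at hp; have := hp.2.1; simp at this
      | cons b l' =>
        apply hp.2.2
        have hl := hp.1.2.2
        rw [hpl] at hl ⊢
        simp only [List.getLast?_cons_cons] at hl
        exact mem_of_getLast?' hl
    obtain ⟨p₁, b, hpe, hp₁, hbv, -⟩ := walk_snoc hp.1 hp.2.1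
    obtain ⟨q₁, c, hqe, hq₁, hcv, -⟩ := walk_snoc hq.1 hq.2.1
    have hbc : c = b := parent_unique hvtree hcv hbv
    subst hbc
    by_cases hbu : c = u
    · subst hbu
      have h1 : p₁ = [c] := by
        rcases Nat.lt_or_ge p₁.length 2 with h | h
        · have : p₁.length = 1 := by
            have := List.length_pos_iff.mpr hp₁.1.1; omega
          exact (walk_singleton hp₁ this).1
        · exact absurd (walk_transGen hp₁ h) (hac c)
      have h2 : q₁ = [c] := by
        rcases Nat.lt_or_ge q₁.length 2 with h | h
        · have : q₁.length = 1 := by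
            have := List.length_pos_iff.mpr hq₁.1.1; omega
          exact (walk_singleton hq₁ this).1
        · exact absurd (walk_transGen hq₁ h) (hac c)
      rw [hpe, hqe, h1, h2]
    · have hlp : 2 ≤ p₁.length := walk_len2 hp₁ (Ne.symm hbu)
      have hlq : 2 ≤ q₁.length := walk_len2 hq₁ (Ne.symm hbu)
      have htp : TreePath E p₁ u c := by
        refine ⟨hp₁, hlp, fun w hw => hp.2.2 w ?_⟩
        rw [hpe, List.tail_append_singleton_of_ne_nil hp₁.1.1]
        exact List.mem_append.mpr (Or.inl hw)
      have htq : TreePath E q₁ u c := by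
        refine ⟨hq₁, hlq, fun w hw => hq.2.2 w ?_⟩
        rw [hqe, List.tail_append_singleton_of_ne_nil hq₁.1.1]
        exact List.mem_append.mpr (Or.inl hw)
      have hplen : p₁.length ≤ n := by
        rw [hpe] at hlen; simp at hlen; omega
      rw [hpe, hqe, ih p₁ q₁ u c hplen htp htq]

lemma treeDesc_iff {u v : V} :
    TreeDesc E u v ↔ Relation.TransGen (fun a b => E a b ∧ IsTreeNode E b) u v := by
  constructor
  · rintro ⟨p, hw, hlen, htail⟩
    obtain ⟨l, rfl⟩ := walk_head_cons hw
    obtain ⟨hch, hlast⟩ := walk_chain hw rfl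
    cases l with
    | nil => simp at hlen
    | cons b l' =>
      simp only [List.tail_cons] at htail
      have hch' : List.Chain (fun a b => E a b ∧ IsTreeNode E b) u (b :: l') :=
        chain_restrict hch htail
      cases hch' with
      | cons_cons hub hch'' =>
        refine Relation.TransGen.head' hub
          (List.relationReflTransGen_of_exists_isChain_cons l' hch'' ?_)
        rw [List.getLast_cons (List.cons_ne_nil b l')] at hlast
        exact hlast
  · intro h
    induction h with
    | single h => exact ⟨[u, _], treePath_pair h.1 h.2⟩
    | tail _ h ih => obtain ⟨p, hp⟩ := ih; exact ⟨p ++ [_], treePath_snoc hp h.1 h.2⟩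

end Stmt5Aux

/-- In a tree-child hybridization network, every internal node has a tree
descendant leaf; every tree descendant `v` of `u` is a strict descendant of `u`, and the
tree path from `u` to `v` is unique. -/
theorem stmt5 {V : Type} [Fintype V] (E : V → V → Prop) (r : V)
    (hnet : IsHybNet E r) (htc : TreeChild E) :
    ∀ u, ¬ IsLeaf E u →
      (∃ v, IsLeaf E v ∧ TreeDesc E u v) ∧
      ∀ v, TreeDesc E u v →
        StrictAnc E u v ∧ ∀ p q, TreePath E p u v → TreePath E q u v → p = q := by
  have hac := hnet.acyclic
  have hwf : WellFounded (fun a b : V => E b a) := by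
    haveI : IsTrans V (fun a b : V => Relation.TransGen E b a) :=
      ⟨fun a b c h1 h2 => h2.trans h1⟩
    haveI : IsIrrefl V (fun a b : V => Relation.TransGen E b a) := ⟨fun a h => hac a h⟩
    exact Subrelation.wf (fun h => Relation.TransGen.single h)
      (Finite.wellFounded_of_trans_of_irrefl _)
  have hexists : ∀ u, ¬ IsLeaf E u → ∃ v, IsLeaf E v ∧ TreeDesc E u v := by
    intro u
    induction u using hwf.induction with
    | _ u ih =>
      intro hu
      obtain ⟨w, hw, htw⟩ := htc u hu
      by_cases hl : IsLeaf E w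
      · exact ⟨w, hl, ⟨[u, w], treePath_pair hw htw⟩⟩
      · obtain ⟨v, hvl, p, hp⟩ := ih w hw hl
        exact ⟨v, hvl, u :: p, treePath_cons hp hw htw⟩
  intro u hu
  refine ⟨hexists u hu, fun v hv => ⟨⟨?_, ?_⟩, fun p q hp hq =>
    treePath_unique_aux hac p.length p q u v le_rfl hp hq⟩⟩
  · obtain ⟨p, hp⟩ := hv
    exact walk_reflTransGen hp.1
  · intro r' p hr' hp
    exact mem_walk_of_transGen (treeDesc_iff.mp hv) r' p hr' hp
end

section
/- Let N be a tree-child time consistent hybridization network and let i, j be distinct leaves. Then i and j are sibling tree leaves if, and only if, ℓ_N(i,j) = 1, ℓ_N(j,i) = 1, and the least common semi-strict ancestor [i,j] is a strict ancestor of both i and j. -/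
open Classical

section Helpers
variable {V : Type} {E : V → V → Prop}

lemma walk_single (E : V → V → Prop) (u : V) : WalkFromTo E u u [u] :=
  ⟨⟨by simp, List.isChain_singleton u⟩, by simp, by simp⟩

lemma walk_edge {u v : V} (h : E u v) : WalkFromTo E u v [u, v] :=
  ⟨⟨by simp, List.isChain_pair.mpr h⟩, by simp, by simp⟩

lemma walk_trans {u a b w : V} {p q : List V} (h1 : WalkFromTo E u a p)
    (h2 : WalkFromTo E b w q) (hab : E a b) : WalkFromTo E u w (p ++ q) := by
  obtain ⟨⟨hp0, hpc⟩, hph, hpl⟩ := h1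
  obtain ⟨⟨hq0, hqc⟩, hqh, hql⟩ := h2
  refine ⟨⟨by simp [hp0], ?_⟩, ?_, ?_⟩
  · rw [List.Chain', List.isChain_append]
    refine ⟨hpc, hqc, ?_⟩
    intro x hx y hy
    rw [hpl] at hx; rw [hqh] at hy
    simp at hx hy; subst hx; subst hy; exact hab
  · rwa [List.head?_append_of_ne_nil _ hp0]
  · rw [List.getLast?_append_of_ne_nil _ hq0]; exact hql

lemma walk_glue {u m v : V} {p q : List V} (h1 : WalkFromTo E u m p)
    (h2 : WalkFromTo E m v q) : WalkFromTo E u v (p ++ q.tail) := by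
  obtain ⟨⟨hq0, hqc⟩, hqh, hql⟩ := h2
  cases q with
  | nil => exact absurd rfl hq0
  | cons a t =>
    simp at hqh; subst hqh
    cases t with
    | nil =>
      simp at hql; subst hql; simpa using h1
    | cons b t' =>
      rw [List.Chain', List.isChain_cons_cons] at hqc
      have : WalkFromTo E b v (b :: t') := ⟨⟨by simp, hqc.2⟩, rfl, by
        rw [← hql]; simp [List.getLast?_cons_cons]⟩
      simpa using walk_trans h1 this hqc.1

lemma desc_to_walk {u v : V} (h : Desc E u v) : ∃ p, WalkFromTo E u v p := by
  induction h with
  | refl => exact ⟨[u], walk_single E u⟩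
  | tail _ hbc ih =>
    obtain ⟨p, hp⟩ := ih
    exact ⟨p ++ [_], walk_trans hp (walk_single E _) hbc⟩

lemma walk_to_desc {u v : V} {p : List V} (h : WalkFromTo E u v p) : Desc E u v := by
  induction p generalizing u with
  | nil => exact absurd rfl h.1.1
  | cons a t ih =>
    obtain ⟨⟨_, hc⟩, hh, hl⟩ := h
    simp at hh; subst hh
    cases t with
    | nil => simp at hl; subst hl; exact Relation.ReflTransGen.refl
    | cons b t' =>
      rw [List.Chain', List.isChain_cons_cons] at hc
      have : Desc E b v := ih ⟨⟨by simp, hc.2⟩, rfl, by rw [← hl]; simp [List.getLast?_cons_cons]⟩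
      exact Relation.ReflTransGen.head hc.1 this

lemma mem_walk {u v x : V} {p : List V} (h : WalkFromTo E u v p) (hx : x ∈ p) :
    Desc E u x ∧ Desc E x v := by
  induction p generalizing u with
  | nil => exact absurd rfl h.1.1
  | cons a t ih =>
    obtain ⟨⟨_, hc⟩, hh, hl⟩ := h
    simp at hh; subst hh
    rcases List.mem_cons.mp hx with rfl | hx'
    · exact ⟨Relation.ReflTransGen.refl, walk_to_desc ⟨⟨by simp, hc⟩, rfl, hl⟩⟩
    · cases t with
      | nil => simp at hx'
      | cons b t' =>
        rw [List.Chain', List.isChain_cons_cons] at hc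
        have hw : WalkFromTo E b v (b :: t') :=
          ⟨⟨by simp, hc.2⟩, rfl, by rw [← hl]; simp [List.getLast?_cons_cons]⟩
        obtain ⟨d1, d2⟩ := ih hw hx'
        exact ⟨Relation.ReflTransGen.head hc.1 d1, d2⟩

lemma parent_of_walk {u v : V} {p : List V} (h : WalkFromTo E u v p) (hne : u ≠ v) :
    ∃ q ∈ p, E q v := by
  induction p generalizing u with
  | nil => exact absurd rfl h.1.1
  | cons a t ih =>
    obtain ⟨⟨_, hc⟩, hh, hl⟩ := h
    simp at hh; subst hh
    cases t with
    | nil => simp at hl; exact absurd hl hne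
    | cons b t' =>
      rw [List.Chain', List.isChain_cons_cons] at hc
      have hw : WalkFromTo E b v (b :: t') :=
        ⟨⟨by simp, hc.2⟩, rfl, by rw [← hl]; simp [List.getLast?_cons_cons]⟩
      by_cases hbv : b = v
      · subst hbv; exact ⟨a, by simp, hc.1⟩
      · obtain ⟨q, hq, hqv⟩ := ih hw hbv
        exact ⟨q, by simp [hq], hqv⟩

lemma wf_fwd [Fintype V] (hac : Acyclic E) :
    WellFounded (fun a b => Relation.TransGen E a b) := by
  haveI : IsTrans V (fun a b => Relation.TransGen E a b) :=
    ⟨fun _ _ _ h1 h2 => h1.trans h2⟩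
  haveI : IsIrrefl V (fun a b => Relation.TransGen E a b) := ⟨hac⟩
  exact Finite.wellFounded_of_trans_of_irrefl _

lemma wf_bwd [Fintype V] (hac : Acyclic E) :
    WellFounded (fun a b => Relation.TransGen E b a) := by
  haveI : IsTrans V (fun a b => Relation.TransGen E b a) :=
    ⟨fun _ _ _ h1 h2 => h2.trans h1⟩
  haveI : IsIrrefl V (fun a b => Relation.TransGen E b a) := ⟨hac⟩
  exact Finite.wellFounded_of_trans_of_irrefl _

lemma transGen_of_desc_ne {u v : V} (h : Desc E u v) (hne : u ≠ v) :
    Relation.TransGen E u v := by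
  rcases (Relation.reflTransGen_iff_eq_or_transGen.mp h) with rfl | h'
  · exact absurd rfl hne
  · exact h'

lemma exists_root_walk [Fintype V] (hac : Acyclic E) (v : V) :
    ∃ r0 p, IsRootNode E r0 ∧ WalkFromTo E r0 v p := by
  induction v using (wf_fwd hac).induction with
  | _ v ih =>
    by_cases h : ∃ u, E u v
    · obtain ⟨u, hu⟩ := h
      obtain ⟨r0, p, hr, hw⟩ := ih u (Relation.TransGen.single hu)
      exact ⟨r0, p ++ [v], hr, walk_trans hw (walk_single E v) hu⟩
    · exact ⟨v, [v], fun u hu => h ⟨u, hu⟩, walk_single E v⟩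

lemma exists_leaf_walk [Fintype V] (hac : Acyclic E) (v : V) :
    ∃ w p, WalkFromTo E v w p ∧ IsLeaf E w := by
  induction v using (wf_bwd hac).induction with
  | _ v ih =>
    by_cases h : ∃ w, E v w
    · obtain ⟨w, hw⟩ := h
      obtain ⟨l, p, hwp, hl⟩ := ih w (Relation.TransGen.single hw)
      exact ⟨l, [v] ++ p, walk_trans (walk_single E v) hwp hw, hl⟩
    · exact ⟨v, [v], walk_single E v, fun w hw => h ⟨w, hw⟩⟩

lemma walk_nodup [Fintype V] (hac : Acyclic E) {p : List V}
    (h : p.Chain' E) : p.Nodup := by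
  rw [List.nodup_iff_sublist]
  intro a hsub
  have hmono : p.Chain' (Relation.TransGen E) :=
    List.IsChain.imp (fun _ _ h => Relation.TransGen.single h) h
  haveI : IsTrans V (Relation.TransGen E) := ⟨fun _ _ _ h1 h2 => h1.trans h2⟩
  have := List.IsChain.sublist hmono hsub
  rw [List.isChain_cons_cons] at this
  exact hac a this.1

lemma height_bdd [Fintype V] (hac : Acyclic E) (v : V) :
    ∀ n ∈ {n | ∃ p w, WalkFromTo E v w p ∧ IsLeaf E w ∧ p.length = n + 1},
      n ≤ Fintype.card V := by
  rintro n ⟨p, w, hw, _, hlen⟩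
  have := List.Nodup.length_le_card (walk_nodup hac hw.1.2)
  omega

lemma height_mem [Fintype V] (hac : Acyclic E) (v : V) :
    ∃ p w, WalkFromTo E v w p ∧ IsLeaf E w ∧ p.length = height E v + 1 := by
  have hne : {n | ∃ p w, WalkFromTo E v w p ∧ IsLeaf E w ∧ p.length = n + 1}.Nonempty := by
    obtain ⟨w, p, hw, hl⟩ := exists_leaf_walk hac v
    have : p.length ≠ 0 := by
      intro h0; exact hw.1.1 (List.length_eq_zero_iff.mp h0)
    exact ⟨p.length - 1, p, w, hw, hl, by omega⟩
  have hbdd : BddAbove {n | ∃ p w, WalkFromTo E v w p ∧ IsLeaf E w ∧ p.length = n + 1} :=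
    ⟨Fintype.card V, fun n hn => height_bdd hac v n hn⟩
  exact Nat.sSup_mem hne hbdd

lemma height_lt_of_edge [Fintype V] (hac : Acyclic E) {y z : V} (h : E y z) :
    height E z < height E y := by
  obtain ⟨p, w, hw, hl, hlen⟩ := height_mem hac z
  have hyw : WalkFromTo E y w ([y] ++ p) := walk_trans (walk_single E y) hw h
  have hmem : height E z + 1 ∈
      {n | ∃ p w, WalkFromTo E y w p ∧ IsLeaf E w ∧ p.length = n + 1} :=
    ⟨[y] ++ p, w, hyw, hl, by simp [hlen]⟩
  have hbdd : BddAbove {n | ∃ p w, WalkFromTo E y w p ∧ IsLeaf E w ∧ p.length = n + 1} :=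
    ⟨Fintype.card V, fun n hn => height_bdd hac y n hn⟩
  exact Nat.lt_of_succ_le (le_csSup hbdd hmem)

lemma height_mono [Fintype V] (hac : Acyclic E) {y z : V} (h : Desc E y z) :
    height E z ≤ height E y := by
  induction h with
  | refl => exact le_rfl
  | tail _ hbc ih => exact le_trans (le_of_lt (height_lt_of_edge hac hbc)) ih

lemma height_lt_of_transGen [Fintype V] (hac : Acyclic E) {y z : V}
    (h : Relation.TransGen E y z) : height E z < height E y := by
  obtain ⟨b, hb, hbc⟩ := Relation.TransGen.tail'_iff.mp h
  exact lt_of_lt_of_le (height_lt_of_edge hac hbc) (height_mono hac hb)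

lemma dist_eq_one {u v : V} (h : E u v) (hne : u ≠ v) : _root_.dist E u v = 1 := by
  have h1 : (1 : ℕ) ∈ {n | ∃ p, WalkFromTo E u v p ∧ p.length = n + 1} :=
    ⟨[u, v], walk_edge h, rfl⟩
  have hne' : {n | ∃ p, WalkFromTo E u v p ∧ p.length = n + 1}.Nonempty := ⟨1, h1⟩
  have hmem := Nat.sInf_mem hne'
  obtain ⟨p, hp, hlen⟩ := hmem
  have : _root_.dist E u v ≠ 0 := by
    intro h0
    unfold _root_.dist at h0
    rw [h0] at hlen
    obtain ⟨a, rfl⟩ := List.length_eq_one_iff.mp hlen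
    obtain ⟨hh, hl⟩ := hp.2
    simp at hh hl
    exact hne (hh.symm.trans hl)
  have := Nat.sInf_le h1
  unfold _root_.dist at *
  omega

lemma edge_of_dist_one {u v : V} (h : _root_.dist E u v = 1) : E u v := by
  have hne : {n | ∃ p, WalkFromTo E u v p ∧ p.length = n + 1}.Nonempty := by
    by_contra hc
    rw [Set.not_nonempty_iff_eq_empty] at hc
    unfold _root_.dist at h
    rw [hc] at h
    simp at h
  have hmem := Nat.sInf_mem hne
  unfold _root_.dist at h
  rw [h] at hmem
  obtain ⟨p, hp, hlen⟩ := hmem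
  obtain ⟨a, b, rfl⟩ := List.length_eq_two.mp hlen
  obtain ⟨⟨_, hc⟩, hh, hl⟩ := hp
  simp [List.Chain'] at hh hl hc
  subst hh; subst hl; exact hc

lemma hybrid_parent_ne [Fintype V] {v : V} (hv : IsHybrid E v) (x : V) :
    ∃ y, y ≠ x ∧ E y v := by
  have hfin : {u | E u v}.Finite := Set.toFinite _
  have : 1 < Set.ncard {u | E u v} := lt_of_lt_of_le one_lt_two hv
  obtain ⟨a, b, ha, hb, hab⟩ := (Set.one_lt_ncard_iff hfin).mp this
  by_cases hax : a = x
  · exact ⟨b, by rw [← hax]; exact fun h => hab h.symm, hb⟩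
  · exact ⟨a, hax, ha⟩

lemma tree_unique_parent [Fintype V] {v p q : V} (hv : IsTreeNode E v) (hp : E p v) (hq : E q v) :
    p = q := by
  have hfin : {u | E u v}.Finite := Set.toFinite _
  exact (Set.ncard_le_one hfin).mp hv p hp q hq

lemma not_tree_hybrid {v : V} (h : ¬ IsTreeNode E v) : IsHybrid E v := by
  unfold IsTreeNode at h; unfold IsHybrid; omega

end Helpers


section Core
variable {V : Type} {E : V → V → Prop}

lemma tau_le_of_edge {τ : V → ℕ}
    (hτ : ∀ u v, E u v → (IsTreeNode E v → τ u < τ v) ∧ (IsHybrid E v → τ u = τ v))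
    {u v : V} (h : E u v) : τ u ≤ τ v := by
  by_cases ht : IsTreeNode E v
  · exact le_of_lt ((hτ u v h).1 ht)
  · exact le_of_eq ((hτ u v h).2 (not_tree_hybrid ht))

lemma tau_le_of_desc {τ : V → ℕ}
    (hτ : ∀ u v, E u v → (IsTreeNode E v → τ u < τ v) ∧ (IsHybrid E v → τ u = τ v))
    {u v : V} (h : Desc E u v) : τ u ≤ τ v := by
  induction h with
  | refl => exact le_rfl
  | tail _ hbc ih => exact le_trans ih (tau_le_of_edge hτ hbc)

/-- Core lemma: if `x` is a parent of `i` and a strict-ancestor in the walk sense,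
then `i` is a tree node (in a finite acyclic time-consistent digraph). -/
lemma tree_of_strict_parent [Fintype V] (hac : Acyclic E) (hti : TimeConsistent E)
    {x i : V} (hxi : E x i)
    (hstr : ∀ (r : V) (p : List V), IsRootNode E r → WalkFromTo E r i p → x ∈ p) :
    IsTreeNode E i := by
  by_contra htree
  have hyb_i : IsHybrid E i := not_tree_hybrid htree
  obtain ⟨τ, hτ⟩ := hti
  have hxnei : x ≠ i := fun h => hac i (Relation.TransGen.single (h ▸ hxi))
  -- key: for w a parent of z with z a descendant source to i
  have key : ∀ w z, E w z → Desc E z i → Desc E x z → x ≠ z → w ≠ x →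
      Relation.TransGen E x w := by
    intro w z hwz hzi hxz hxnz hwnx
    obtain ⟨r0, p1, hr0, hw1⟩ := exists_root_walk hac w
    obtain ⟨pz, hpz⟩ := desc_to_walk hzi
    have hwi : WalkFromTo E w i ([w] ++ pz) := walk_trans (walk_single E w) hpz hwz
    have hWhole : WalkFromTo E r0 i (p1 ++ ([w] ++ pz).tail) := walk_glue hw1 hwi
    have hxin := hstr r0 _ hr0 hWhole
    rw [List.mem_append] at hxin
    rcases hxin with hx1 | hx2
    · exact transGen_of_desc_ne (mem_walk hw1 hx1).2 hwnx.symm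
    · exfalso
      simp only [List.singleton_append, List.tail_cons] at hx2
      have hdzx : Desc E z x := (mem_walk hpz hx2).1
      exact hac x ((transGen_of_desc_ne hxz hxnz).trans_left hdzx)
  -- the bad set
  set B : Set V := {w | Relation.TransGen E x w ∧ Desc E w i ∧ τ w = τ x} with hB
  have hBhyb : ∀ w ∈ B, IsHybrid E w := by
    rintro w ⟨htg, _, hτw⟩
    obtain ⟨u, hxu, huw⟩ := Relation.TransGen.tail'_iff.mp htg
    by_contra htw
    have h1 : τ u < τ w := (hτ u w huw).1 (by
      by_contra h'; exact htw (not_tree_hybrid h'))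
    have h2 : τ x ≤ τ u := tau_le_of_desc hτ hxu
    omega
  have hBne : B.Nonempty := by
    obtain ⟨y, hynx, hyi⟩ := hybrid_parent_ne hyb_i x
    have hτy : τ y = τ x := by
      have h1 := (hτ y i hyi).2 hyb_i
      have h2 := (hτ x i hxi).2 hyb_i
      omega
    have htg : Relation.TransGen E x y :=
      key y i hyi Relation.ReflTransGen.refl (Relation.ReflTransGen.single hxi)
        hxnei hynx
    exact ⟨y, htg, Relation.ReflTransGen.single hyi, hτy⟩
  have hBstep : ∀ w ∈ B, ∃ q ∈ B, E q w := by
    rintro w ⟨htg, hwi, hτw⟩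
    have hwhyb : IsHybrid E w := hBhyb w ⟨htg, hwi, hτw⟩
    have hxnw : x ≠ w := fun h => hac x (h ▸ htg)
    obtain ⟨q, hqnx, hqw⟩ := hybrid_parent_ne hwhyb x
    have hτq : τ q = τ w := (hτ q w hqw).2 hwhyb
    have htgq : Relation.TransGen E x q :=
      key q w hqw hwi htg.to_reflTransGen hxnw hqnx
    exact ⟨q, ⟨htgq, (Relation.ReflTransGen.single hqw).trans hwi, by omega⟩, hqw⟩
  obtain ⟨m, hmB, hmin⟩ := (wf_fwd hac).has_min B hBne
  obtain ⟨q, hqB, hqm⟩ := hBstep m hmB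
  exact hmin q hqB (Relation.TransGen.single hqm)
end Core


lemma csa_symm {V : Type} (E : V → V → Prop) (u v : V) : CSAnc E u v = CSAnc E v u := by
  ext x
  constructor <;> rintro ⟨a, b, c⟩ <;> exact ⟨b, a, c.symm⟩

lemma lcsa_symm {V : Type} (E : V → V → Prop) (r u v : V) :
    lcsa E r u v = lcsa E r v u := by
  have h : IsLCSA E u v = IsLCSA E v u := by
    funext x
    unfold IsLCSA
    rw [csa_symm]
  unfold lcsa
  rw [h]

/-- In a TCTC hybridization network, distinct leaves `i, j` are sibling
tree leaves iff `ℓ_N(i,j) = 1`, `ℓ_N(j,i) = 1`, and `[i,j]` is a strict ancestor of both. -/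
theorem stmt14 {V : Type} [Fintype V] (E : V → V → Prop) (r : V)
    (hnet : IsHybNet E r) (htc : TreeChild E) (hti : TimeConsistent E)
    (i j : V) (hi : IsLeaf E i) (hj : IsLeaf E j) (hij : i ≠ j) :
    (IsTreeNode E i ∧ IsTreeNode E j ∧ Sibling E i j) ↔
      (ell E r i j = 1 ∧ ell E r j i = 1 ∧
        StrictAnc E (lcsa E r i j) i ∧ StrictAnc E (lcsa E r i j) j) := by
  have hac := hnet.acyclic
  have hrnl : ¬ IsLeaf E r := by
    intro hl
    have hne : {w | E r w}.Nonempty := by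
      apply Set.nonempty_of_ncard_ne_zero
      have := hnet.rootOut
      unfold outdeg at this
      omega
    obtain ⟨w, hw⟩ := hne
    exact hl w hw
  have hlsymm : lcsa E r j i = lcsa E r i j := lcsa_symm E r j i
  constructor
  · rintro ⟨ht_i, ht_j, _, p, hpi, hpj⟩
    have hpni : p ≠ i := fun h => hac i (Relation.TransGen.single (h ▸ hpi))
    have hpnj : p ≠ j := fun h => hac j (Relation.TransGen.single (h ▸ hpj))
    -- strict ancestry of p over i and j
    have hstrict : ∀ v, IsLeaf E v → IsTreeNode E v → E p v → StrictAnc E p v := by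
      intro v hlv htv hpv
      refine ⟨Relation.ReflTransGen.single hpv, ?_⟩
      intro r' q hr' hq
      have hr'r : r' = r := hnet.uniqueRoot r' hr'
      rw [hr'r] at hq
      have hrnv : r ≠ v := fun h => hrnl (h ▸ hlv)
      obtain ⟨q', hq'mem, hq'v⟩ := parent_of_walk hq hrnv
      rwa [tree_unique_parent htv hq'v hpv] at hq'mem
    have hSi := hstrict i hi ht_i hpi
    have hSj := hstrict j hj ht_j hpj
    have hpCSA : p ∈ CSAnc E i j :=
      ⟨Relation.ReflTransGen.single hpi, Relation.ReflTransGen.single hpj, Or.inl hSi⟩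
    -- any common ancestor descends to p
    have hdesc_p : ∀ y, Desc E y i → Desc E y j → Desc E y p := by
      intro y hyi hyj
      have hyni : y ≠ i := by
        rintro rfl
        rcases Relation.ReflTransGen.cases_head hyj with h | ⟨c, hc, _⟩
        · exact hij h
        · exact hi c hc
      rcases Relation.ReflTransGen.cases_tail hyi with h | ⟨c, hyc, hci⟩
      · exact absurd h.symm hyni
      · rwa [tree_unique_parent ht_i hci hpi] at hyc
    have hpMin : ∀ y ∈ CSAnc E i j, height E p ≤ height E y := by
      rintro y ⟨hyi, hyj, _⟩
      have hyp : Desc E y p := hdesc_p y hyi hyj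
      by_cases hyep : y = p
      · exact le_of_eq (by rw [hyep])
      · exact le_of_lt (height_lt_of_transGen hac (transGen_of_desc_ne hyp hyep))
    have hpLCSA : IsLCSA E i j p := ⟨hpCSA, hpMin⟩
    have hLC : IsLCSA E i j (lcsa E r i j) := Classical.epsilon_spec ⟨p, hpLCSA⟩
    have hLp : lcsa E r i j = p := by
      obtain ⟨⟨hLi, hLj, _⟩, hLmin⟩ := hLC
      by_contra hne
      have hLdesc : Desc E (lcsa E r i j) p := hdesc_p _ hLi hLj
      have := height_lt_of_transGen hac (transGen_of_desc_ne hLdesc hne)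
      have := hLmin p hpCSA
      omega
    refine ⟨?_, ?_, ?_, ?_⟩
    · unfold ell
      rw [hLp]
      exact dist_eq_one hpi hpni
    · unfold ell
      rw [hlsymm, hLp]
      exact dist_eq_one hpj hpnj
    · rw [hLp]; exact hSi
    · rw [hLp]; exact hSj
  · rintro ⟨h1, h2, h3, h4⟩
    unfold ell at h1 h2
    rw [hlsymm] at h2
    have hx_i : E (lcsa E r i j) i := edge_of_dist_one h1
    have hx_j : E (lcsa E r i j) j := edge_of_dist_one h2
    have ht_i : IsTreeNode E i := tree_of_strict_parent hac hti hx_i h3.2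
    have ht_j : IsTreeNode E j := tree_of_strict_parent hac hti hx_j h4.2
    exact ⟨ht_i, ht_j, hij, lcsa E r i j, hx_i, hx_j⟩
end
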